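/- The additional non-rational letter f₁₀ of the eight-particle scattering-diagram alphabet is a rational multiple of the square root: with the asymptotic-chamber cone variables x_{γ₁}⁰, x_{γ₉}⁰, x_{γ₅}⁰ defined below, one has x_{γ₅}⁰·(1 − x_{γ₁}⁰·x_{γ₉}⁰) = x₅·s, i.e. f₁₀ = x₅·√Δ′. -/
import Mathlib


/-- The additional non-rational letter `f₁₀` of the eight-particle scattering-diagram
alphabet is a rational multiple of the square root: `f₁₀ = x₅·√Δ′`. -/
theorem octagon_f10_letter {F : Type*} [Field F] (x₁ x₅ x₉ : F)
    (Δ' : F) (hΔ : Δ' = (1 + x₁ * (1 + x₉)) ^ 2 - 4 * x₁ * x₉)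
    (s : F) (hs : s ≠ 0) (hs2 : s ^ 2 = Δ')
    (hden : 1 + x₁ - x₁ * x₉ + s ≠ 0)
    (xg1 xg9 xg5 : F)
    (hxg1 : xg1 = 4 * x₁ * Δ' / (1 + x₁ - x₁ * x₉ + s) ^ 2)
    (hxg9 : xg9 = x₉ / 4 * (1 + (1 - x₁ * (1 + x₉)) / s) ^ 2)
    (hxg5 : xg5 = x₅ / 2 * (1 + x₁ * (1 + x₉) + s)) :
    xg5 * (1 - xg1 * xg9) = x₅ * s := by
  subst hΔ
  by_cases hc2 : (2 : F) = 0
  · exfalso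
    apply hden
    have ht : (1 + x₁ - x₁ * x₉ + s) ^ 2 = 0 := by
      linear_combination hs2 + ((1 + x₁) ^ 2 + x₁ ^ 2 * x₉ ^ 2 - 2 * x₁ * x₉
        + (1 + x₁ - x₁ * x₉) * s) * hc2
    exact (pow_eq_zero_iff two_ne_zero).mp ht
  · have h4 : (4 : F) ≠ 0 := by
      have := mul_ne_zero hc2 hc2
      norm_num at this
      exact this
    have hd2 : (1 + x₁ - x₁ * x₉ + s) ^ 2 ≠ 0 := pow_ne_zero 2 hden
    have e9 : 1 + (1 - x₁ * (1 + x₉)) / s = (s + 2 - (1 + x₁ * (1 + x₉))) / s := by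
      field_simp; ring
    have h19 : xg1 * xg9
        = x₁ * x₉ * (s + 2 - (1 + x₁ * (1 + x₉))) ^ 2 / (1 + x₁ - x₁ * x₉ + s) ^ 2 := by
      rw [hxg1, hxg9, ← hs2, e9, div_pow, div_mul_div_comm, div_mul_div_comm,
        div_eq_div_iff (mul_ne_zero hd2 (mul_ne_zero h4 (pow_ne_zero 2 hs))) hd2]
      ring
    have key : x₅ / 2 * (1 + x₁ * (1 + x₉) + s) *
        ((1 + x₁ - x₁ * x₉ + s) ^ 2
          - x₁ * x₉ * (s + 2 - (1 + x₁ * (1 + x₉))) ^ 2)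
        = x₅ * s * (1 + x₁ - x₁ * x₉ + s) ^ 2 := by
      rw [div_mul_eq_mul_div, div_mul_eq_mul_div, div_eq_iff hc2]
      linear_combination (x₅ * (-((1 + x₁ * x₉) * s
        + (1 + x₁ * (1 + x₉)) * (1 - x₁ * x₉)))) * hs2
    have hrw : (1 : F)
        - x₁ * x₉ * (s + 2 - (1 + x₁ * (1 + x₉))) ^ 2 / (1 + x₁ - x₁ * x₉ + s) ^ 2
        = ((1 + x₁ - x₁ * x₉ + s) ^ 2
            - x₁ * x₉ * (s + 2 - (1 + x₁ * (1 + x₉))) ^ 2)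
          / (1 + x₁ - x₁ * x₉ + s) ^ 2 := by
      rw [eq_div_iff hd2, sub_mul, div_mul_cancel₀ _ hd2, one_mul]
    rw [hxg5, h19, hrw, ← mul_div_assoc, div_eq_iff hd2]
    linear_combination key
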